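/- For 0 < ε ≤ 1 let v_ε be the continuous 2π-periodic function equal to ε^{-2} max(ε − |x|, 0) for |x| ≤ 4 (extended periodically) and set u_ε = v_ε − (2π)^{-1}. Then, up to positive constants independent of ε: ∫ u_ε³ dx ≍ ε^{-2}, ∫ u_ε² dx ≍ ε^{-1}, and ∫ (∂_x u_ε)² dx ≍ ε^{-3}. Consequently, the inequality |∫ u³ dx| ≤ C ‖u‖_{H_0^1}^{2−κ} |u|_{L²}^{1+κ} for all u ∈ H_0^1 forces κ ≤ 3/2. -/

import Mathlib

open scoped Real
open intervalIntegral

noncomputable section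

/-- Reduction of `x` modulo `2π` to the fundamental interval around `0`. -/
def per (x : ℝ) : ℝ := x - 2 * π * round (x / (2 * π))

/-- The continuous `2π`-periodic spike function `v_ε`, equal to `ε⁻² max(ε − |x|, 0)` near
`x = 0`, shifted by its mean value: `u_ε = v_ε − (2π)⁻¹`. -/
def uSpike (ε : ℝ) (x : ℝ) : ℝ := (ε ^ 2)⁻¹ * max (ε - |per x|) 0 - (2 * π)⁻¹

namespace SpikeAux

lemma two_pi_pos : (0:ℝ) < 2 * π := by positivity

lemma per_eq_self {x : ℝ} (h1 : -π ≤ x) (h2 : x < π) : per x = x := by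
  have hr : round (x / (2 * π)) = 0 := by
    rw [round_eq_zero_iff]
    constructor
    · rw [neg_le, ← neg_div, div_le_iff₀ two_pi_pos]; linarith
    · rw [div_lt_iff₀ two_pi_pos]; linarith
  simp [per, hr]

lemma per_pi : per π = -π := by
  have : π / (2 * π) = 1/2 := by
    rw [div_eq_iff (ne_of_gt two_pi_pos)]; ring
  simp [per, this]
  ring

lemma abs_per_le (x : ℝ) (k : ℤ) : |per x| ≤ |x - 2 * π * k| := by
  have h := round_le (x / (2 * π)) k
  have h2 : |x / (2*π) - round (x / (2*π))| * (2*π) ≤ |x / (2*π) - k| * (2*π) :=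
    mul_le_mul_of_nonneg_right h (le_of_lt two_pi_pos)
  have e1 : per x = (x / (2*π) - round (x/(2*π))) * (2*π) := by
    field_simp [per]
    rfl
  have e2 : x - 2 * π * k = (x / (2*π) - k) * (2*π) := by
    field_simp
  rw [e1, e2, abs_mul _ (2*π), abs_mul _ (2*π), abs_of_pos two_pi_pos]
  exact h2

lemma abs_per_lip (x y : ℝ) : |per x| ≤ |x - y| + |per y| := by
  have h := abs_per_le x (round (y / (2 * π)))
  have : |x - 2 * π * round (y / (2*π))| ≤ |x - y| + |per y| := by
    have : x - 2 * π * round (y / (2*π)) = (x - y) + per y := by unfold per; ring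
    rw [this]; exact abs_add_le _ _
  linarith

lemma uSpike_lipschitz (ε : ℝ) (hε : 0 < ε) :
    LipschitzWith ⟨(ε^2)⁻¹, by positivity⟩ (uSpike ε) := by
  apply LipschitzWith.of_dist_le_mul
  intro x y
  simp only [Real.dist_eq, uSpike]
  have key : |max (ε - |per x|) 0 - max (ε - |per y|) 0| ≤ |x - y| := by
    have h1 : |(ε - |per x|) - (ε - |per y|)| ≤ |x - y| := by
      rw [show (ε - |per x|) - (ε - |per y|) = |per y| - |per x| by ring]
      rw [abs_sub_le_iff]
      constructor
      · have := abs_per_lip y x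
        rw [abs_sub_comm] at this; linarith
      · have := abs_per_lip x y; linarith
    calc |max (ε - |per x|) 0 - max (ε - |per y|) 0| ≤ |(ε - |per x|) - (ε - |per y|)| :=
          abs_max_sub_max_le_abs _ _ _
      _ ≤ |x - y| := h1
  calc |((ε^2)⁻¹ * max (ε - |per x|) 0 - (2*π)⁻¹) - ((ε^2)⁻¹ * max (ε - |per y|) 0 - (2*π)⁻¹)|
      = (ε^2)⁻¹ * |max (ε - |per x|) 0 - max (ε - |per y|) 0| := by
        rw [show ((ε^2)⁻¹ * max (ε - |per x|) 0 - (2*π)⁻¹) - ((ε^2)⁻¹ * max (ε - |per y|) 0 - (2*π)⁻¹)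
            = (ε^2)⁻¹ * (max (ε - |per x|) 0 - max (ε - |per y|) 0) by ring,
          abs_mul, abs_of_pos (show (0:ℝ) < (ε^2)⁻¹ by positivity)]
    _ ≤ (ε^2)⁻¹ * |x - y| := by
        exact mul_le_mul_of_nonneg_left key (by positivity)

lemma uSpike_periodic (ε : ℝ) : Function.Periodic (uSpike ε) (2 * π) := by
  intro x
  have : per (x + 2 * π) = per x := by
    have : (x + 2 * π) / (2 * π) = x / (2 * π) + 1 := by field_simp
    simp [per, this, round_add_one]
    ring
  simp [uSpike, this]

lemma maxfun_integral (ε : ℝ) (hε : 0 < ε) (hεπ : ε ≤ π) {k : ℕ} (hk : k ≠ 0) :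
    ∫ x in (-π)..π, max (ε - |x|) 0 ^ k = 2 * ε ^ (k+1) / (k+1) := by
  have hcont : Continuous fun x : ℝ => max (ε - |x|) 0 ^ k := by fun_prop
  have hint : ∀ a b : ℝ, IntervalIntegrable (fun x => max (ε - |x|) 0 ^ k) MeasureTheory.volume a b :=
    fun a b => hcont.intervalIntegrable a b
  have split1 : (∫ x in (-π)..π, max (ε - |x|) 0 ^ k) =
      (∫ x in (-π)..(-ε), max (ε - |x|) 0 ^ k) + (∫ x in (-ε)..ε, max (ε - |x|) 0 ^ k)
        + (∫ x in ε..π, max (ε - |x|) 0 ^ k) := by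
    rw [integral_add_adjacent_intervals (hint _ _) (hint _ _),
        integral_add_adjacent_intervals (hint _ _) (hint _ _)]
  have left0 : (∫ x in (-π)..(-ε), max (ε - |x|) 0 ^ k) = 0 := by
    rw [show (0:ℝ) = ∫ x in (-π)..(-ε), (0:ℝ) by simp]
    apply integral_congr
    intro x hx
    rw [Set.uIcc_of_le (by linarith)] at hx
    have : |x| = -x := abs_of_nonpos (by cases hx; linarith)
    have : max (ε - |x|) 0 = 0 := max_eq_right (by cases hx with | intro h1 h2 => rw [this]; linarith)
    simp [this, zero_pow hk]
  have right0 : (∫ x in ε..π, max (ε - |x|) 0 ^ k) = 0 := by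
    rw [show (0:ℝ) = ∫ x in ε..π, (0:ℝ) by simp]
    apply integral_congr
    intro x hx
    rw [Set.uIcc_of_le (by linarith)] at hx
    have : |x| = x := abs_of_nonneg (by cases hx; linarith)
    have : max (ε - |x|) 0 = 0 := max_eq_right (by cases hx with | intro h1 h2 => rw [this]; linarith)
    simp [this, zero_pow hk]
  have mid : (∫ x in (-ε)..ε, max (ε - |x|) 0 ^ k) = 2 * ε ^ (k+1) / (k+1) := by
    have m1 : (∫ x in (-ε)..(0:ℝ), max (ε - |x|) 0 ^ k) = ∫ x in (-ε)..(0:ℝ), (x + ε) ^ k := by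
      apply integral_congr
      intro x hx
      rw [Set.uIcc_of_le (by linarith)] at hx
      obtain ⟨h1, h2⟩ := hx
      simp only []
      rw [abs_of_nonpos h2, max_eq_left (by linarith)]
      ring_nf
    have m2 : (∫ x in (0:ℝ)..ε, max (ε - |x|) 0 ^ k) = ∫ x in (0:ℝ)..ε, (ε - x) ^ k := by
      apply integral_congr
      intro x hx
      rw [Set.uIcc_of_le (by linarith)] at hx
      obtain ⟨h1, h2⟩ := hx
      simp only []
      rw [abs_of_nonneg h1, max_eq_left (by linarith)]
    have v1 : (∫ x in (-ε)..(0:ℝ), (x + ε) ^ k) = ε ^ (k+1) / (k+1) := by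
      rw [intervalIntegral.integral_comp_add_right (fun x => x ^ k) ε]
      simp [integral_pow]
    have v2 : (∫ x in (0:ℝ)..ε, (ε - x) ^ k) = ε ^ (k+1) / (k+1) := by
      rw [intervalIntegral.integral_comp_sub_left (fun x => x ^ k) ε]
      simp [integral_pow]
    rw [← integral_add_adjacent_intervals (hint (-ε) 0) (hint 0 ε), m1, m2, v1, v2]
    ring
  rw [split1, left0, right0, mid]
  ring

lemma abs_per_eq {x : ℝ} (hx : x ∈ Set.Icc (-π) π) : |per x| = |x| := by
  obtain ⟨h1, h2⟩ := hx
  rcases lt_or_eq_of_le h2 with h | h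
  · rw [per_eq_self h1 h]
  · rw [h, per_pi, abs_neg]

lemma uSpike_pow_congr (ε : ℝ) (n : ℕ) :
    (∫ x in (-π)..π, uSpike ε x ^ n) =
      ∫ x in (-π)..π, ((ε^2)⁻¹ * max (ε - |x|) 0 - (2*π)⁻¹) ^ n := by
  apply integral_congr
  intro x hx
  rw [Set.uIcc_of_le (by linarith [Real.pi_pos])] at hx
  simp only [uSpike, abs_per_eq hx]

lemma intable {a b : ℝ} (f : ℝ → ℝ) (hf : Continuous f) :
    IntervalIntegrable f MeasureTheory.volume a b := hf.intervalIntegrable a b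

lemma uSpike_int1 (ε : ℝ) (hε : 0 < ε) (hεπ : ε ≤ π) :
    (∫ x in (-π)..π, uSpike ε x) = 0 := by
  have := uSpike_pow_congr ε 1
  simp only [pow_one] at this
  rw [this]
  rw [integral_sub (by apply intable; fun_prop) (by apply intable; fun_prop),
      integral_const_mul, integral_const]
  have h1 := maxfun_integral ε hε hεπ (k := 1) one_ne_zero
  simp only [pow_one] at h1 ⊢
  rw [h1]
  have hπ := Real.pi_pos
  field_simp
  have hππ : π * π⁻¹ = 1 := mul_inv_cancel₀ hπ.ne'
  linear_combination (-(2*ε^2)) * hππ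

lemma uSpike_int2 (ε : ℝ) (hε : 0 < ε) (hεπ : ε ≤ π) :
    (∫ x in (-π)..π, uSpike ε x ^ 2) = 2/3 * ε⁻¹ - (2*π)⁻¹ := by
  rw [uSpike_pow_congr]
  have expand : (fun x : ℝ => ((ε^2)⁻¹ * max (ε - |x|) 0 - (2*π)⁻¹) ^ 2) =
      fun x : ℝ => (((ε^2)⁻¹^2 * max (ε - |x|) 0 ^ 2 - 2*(ε^2)⁻¹*(2*π)⁻¹ * max (ε - |x|) 0) + (2*π)⁻¹^2) := by
    funext x; ring
  rw [show (∫ x in (-π)..π, ((ε^2)⁻¹ * max (ε - |x|) 0 - (2*π)⁻¹) ^ 2) =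
      ∫ x in (-π)..π, (((ε^2)⁻¹^2 * max (ε - |x|) 0 ^ 2 - 2*(ε^2)⁻¹*(2*π)⁻¹ * max (ε - |x|) 0) + (2*π)⁻¹^2)
    from by rw [expand]]
  rw [integral_add (by apply intable; fun_prop) (by apply intable; fun_prop),
      integral_sub (by apply intable; fun_prop) (by apply intable; fun_prop),
      integral_const_mul, integral_const_mul, integral_const]
  have h1 := maxfun_integral ε hε hεπ (k := 1) one_ne_zero
  have h2 := maxfun_integral ε hε hεπ (k := 2) two_ne_zero
  simp only [pow_one] at h1
  rw [h1, h2]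
  have hπ := Real.pi_pos
  push_cast
  field_simp
  have hππ : π * π⁻¹ = 1 := mul_inv_cancel₀ hπ.ne'
  linear_combination (18*ε*(π*π⁻¹ + 1)) * hππ

lemma uSpike_int3 (ε : ℝ) (hε : 0 < ε) (hεπ : ε ≤ π) :
    (∫ x in (-π)..π, uSpike ε x ^ 3) = 1/2 * ε⁻¹^2 - ε⁻¹/π + 1/(2*π^2) := by
  rw [uSpike_pow_congr]
  have expand : (fun x : ℝ => ((ε^2)⁻¹ * max (ε - |x|) 0 - (2*π)⁻¹) ^ 3) =
      fun x : ℝ => ((((ε^2)⁻¹^3 * max (ε - |x|) 0 ^ 3 - 3*(ε^2)⁻¹^2*(2*π)⁻¹ * max (ε - |x|) 0 ^ 2)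
        + 3*(ε^2)⁻¹*(2*π)⁻¹^2 * max (ε - |x|) 0) - (2*π)⁻¹^3) := by
    funext x; ring
  rw [show (∫ x in (-π)..π, ((ε^2)⁻¹ * max (ε - |x|) 0 - (2*π)⁻¹) ^ 3) =
      ∫ x in (-π)..π, ((((ε^2)⁻¹^3 * max (ε - |x|) 0 ^ 3 - 3*(ε^2)⁻¹^2*(2*π)⁻¹ * max (ε - |x|) 0 ^ 2)
        + 3*(ε^2)⁻¹*(2*π)⁻¹^2 * max (ε - |x|) 0) - (2*π)⁻¹^3)
    from by rw [expand]]
  rw [integral_sub (by apply intable; fun_prop) (by apply intable; fun_prop),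
      integral_add (by apply intable; fun_prop) (by apply intable; fun_prop),
      integral_sub (by apply intable; fun_prop) (by apply intable; fun_prop),
      integral_const_mul, integral_const_mul, integral_const_mul, integral_const]
  have h1 := maxfun_integral ε hε hεπ (k := 1) one_ne_zero
  have h2 := maxfun_integral ε hε hεπ (k := 2) two_ne_zero
  have h3 := maxfun_integral ε hε hεπ (k := 3) three_ne_zero
  simp only [pow_one] at h1
  rw [h1, h2, h3]
  have hπ := Real.pi_pos
  push_cast
  field_simp
  have hππ : π * π⁻¹ = 1 := mul_inv_cancel₀ hπ.ne'
  linear_combination (-12*ε^2*((π*π⁻¹)^2 + π*π⁻¹ + 1)) * hππ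

open MeasureTheory in
lemma deriv_in (ε : ℝ) (hε1 : ε ≤ 1) {x : ℝ} (hx : x ∈ Set.Ioo (-ε) ε)
    (hx0 : x ≠ 0) : deriv (uSpike ε) x ^ 2 = ((ε^2)⁻¹)^2 := by
  have hπ := Real.pi_gt_three
  obtain ⟨h1, h2⟩ := hx
  rcases hx0.lt_or_gt with hneg | hpos
  · have hev : uSpike ε =ᶠ[nhds x] fun y => (ε^2)⁻¹ * (ε + y) - (2*π)⁻¹ := by
      filter_upwards [Ioo_mem_nhds h1 hneg] with y hy
      obtain ⟨hy1, hy2⟩ := hy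
      rw [uSpike, per_eq_self (by linarith) (by linarith), abs_of_neg hy2,
        max_eq_left (by linarith)]
      ring_nf
    rw [hev.deriv_eq]
    have : HasDerivAt (fun y : ℝ => (ε^2)⁻¹ * (ε + y) - (2*π)⁻¹) ((ε^2)⁻¹) x := by
      simpa using (((hasDerivAt_id x).const_add ε).const_mul ((ε^2)⁻¹)).sub_const ((2*π)⁻¹)
    rw [this.deriv]
  · have hev : uSpike ε =ᶠ[nhds x] fun y => (ε^2)⁻¹ * (ε - y) - (2*π)⁻¹ := by
      filter_upwards [Ioo_mem_nhds hpos h2] with y hy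
      obtain ⟨hy1, hy2⟩ := hy
      rw [uSpike, per_eq_self (by linarith) (by linarith), abs_of_pos hy1,
        max_eq_left (by linarith)]
    rw [hev.deriv_eq]
    have : HasDerivAt (fun y : ℝ => (ε^2)⁻¹ * (ε - y) - (2*π)⁻¹) (-(ε^2)⁻¹) x := by
      simpa using (((hasDerivAt_id x).const_sub ε).const_mul ((ε^2)⁻¹)).sub_const ((2*π)⁻¹)
    rw [this.deriv]
    ring

lemma deriv_out (ε : ℝ) {x : ℝ} (hx1 : ε < |x|) (hx2 : |x| < π) :
    deriv (uSpike ε) x = 0 := by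
  have hev : uSpike ε =ᶠ[nhds x] fun _ => -(2*π)⁻¹ := by
    have hopen : IsOpen {y : ℝ | ε < |y| ∧ |y| < π} :=
      (isOpen_Ioo.preimage continuous_abs)
    filter_upwards [hopen.mem_nhds ⟨hx1, hx2⟩] with y hy
    obtain ⟨hy1, hy2⟩ := hy
    have hy3 : -π ≤ y := by cases abs_lt.mp hy2; linarith
    have hy4 : y < π := by cases abs_lt.mp hy2; linarith
    rw [uSpike, per_eq_self hy3 hy4, max_eq_right (by linarith)]
    ring
  rw [hev.deriv_eq, deriv_const]

open MeasureTheory in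
lemma deriv_uSpike_sq_integral (ε : ℝ) (hε : 0 < ε) (hε1 : ε ≤ 1) :
    (∫ x in (-π)..π, deriv (uSpike ε) x ^ 2) = 2 * ε⁻¹ ^ 3 := by
  have hπ := Real.pi_gt_three
  set D : ℝ → ℝ := Set.indicator (Set.Ioo (-ε) ε) (fun _ => ((ε^2)⁻¹)^2) with hD
  have hae : ∀ᵐ x : ℝ, x ∈ Set.uIoc (-π) π → deriv (uSpike ε) x ^ 2 = D x := by
    have hs : (MeasureTheory.volume : Measure ℝ) {-ε, 0, ε, π} = 0 :=
      (Set.toFinite _).measure_zero _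
    filter_upwards [measure_eq_zero_iff_ae_notMem.mp hs] with x hxs hx
    simp only [Set.mem_insert_iff, Set.mem_singleton_iff, not_or] at hxs
    obtain ⟨hne, h0, he, hp⟩ := hxs
    rw [Set.uIoc_of_le (by linarith)] at hx
    obtain ⟨hx1, hx2⟩ := hx
    have hx2' : x < π := lt_of_le_of_ne hx2 hp
    by_cases hin : x ∈ Set.Ioo (-ε) ε
    · rw [deriv_in ε hε1 hin h0, hD, Set.indicator_of_mem hin]
    · have habs : ε < |x| := by
        rw [Set.mem_Ioo, not_and_or] at hin
        rcases hin with h | h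
        · push_neg at h
          rw [abs_of_neg (by linarith)]
          rcases lt_of_le_of_ne h (by simpa [eq_comm, neg_eq_iff_eq_neg] using hne) with h'
          linarith
        · push_neg at h
          have h' : ε < x := lt_of_le_of_ne h (Ne.symm he)
          rw [abs_of_pos (by linarith)]; exact h'
      rw [deriv_out ε habs (abs_lt.mpr ⟨by linarith, hx2'⟩), hD,
        Set.indicator_of_notMem hin]
      norm_num
  rw [integral_congr_ae hae, integral_of_le (by linarith),
    MeasureTheory.setIntegral_indicator measurableSet_Ioo]
  have hset : Set.Ioc (-π) π ∩ Set.Ioo (-ε) ε = Set.Ioo (-ε) ε := by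
    apply Set.inter_eq_right.mpr
    intro y hy
    obtain ⟨hy1, hy2⟩ := hy
    exact ⟨by linarith, by linarith⟩
  rw [hset, MeasureTheory.setIntegral_const, Real.volume_real_Ioo, smul_eq_mul,
    max_eq_left (by linarith)]
  field_simp
  ring

end SpikeAux

open SpikeAux

set_option maxHeartbeats 1000000

/-- The spike functions satisfy `∫ u_ε³ ≍ ε⁻²`, `∫ u_ε² ≍ ε⁻¹`,
`∫ (∂_x u_ε)² ≍ ε⁻³` (integrals over one period `[−π, π]`), and consequently the inequality
`|∫ u³| ≤ C ‖u‖_{H_0^1}^{2−κ} |u|_{L²}^{1+κ}` for all `u ∈ H_0^1` forces `κ ≤ 3/2`. -/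
theorem spike_asymptotics_and_kappa_bound :
    (∃ c₁ C₁ c₂ C₂ c₃ C₃ : ℝ,
      0 < c₁ ∧ 0 < C₁ ∧ 0 < c₂ ∧ 0 < C₂ ∧ 0 < c₃ ∧ 0 < C₃ ∧
      ∀ ε : ℝ, 0 < ε → ε ≤ 1 →
        (c₁ * ε⁻¹ ^ 2 ≤ ∫ x in (-π)..π, uSpike ε x ^ 3) ∧
        ((∫ x in (-π)..π, uSpike ε x ^ 3) ≤ C₁ * ε⁻¹ ^ 2) ∧
        (c₂ * ε⁻¹ ≤ ∫ x in (-π)..π, uSpike ε x ^ 2) ∧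
        ((∫ x in (-π)..π, uSpike ε x ^ 2) ≤ C₂ * ε⁻¹) ∧
        (c₃ * ε⁻¹ ^ 3 ≤ ∫ x in (-π)..π, deriv (uSpike ε) x ^ 2) ∧
        ((∫ x in (-π)..π, deriv (uSpike ε) x ^ 2) ≤ C₃ * ε⁻¹ ^ 3)) ∧
    ∀ κ C : ℝ, 0 < C →
      (∀ u : ℝ → ℝ, Function.Periodic u (2 * π) → (∃ L, LipschitzWith L u) →
        (∫ x in (-π)..π, u x) = 0 →
        |∫ x in (-π)..π, u x ^ 3| ≤
          C * (∫ x in (-π)..π, deriv u x ^ 2) ^ ((2 - κ) / 2) *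
            (∫ x in (-π)..π, u x ^ 2) ^ ((1 + κ) / 2)) →
      κ ≤ 3 / 2 := by
  have hπ3 := Real.pi_gt_three
  have hπ0 := Real.pi_pos
  have hπinv : 1/π ≤ 1/3 := by
    rw [div_le_div_iff₀ hπ0 (by norm_num)]; linarith
  constructor
  · refine ⟨1/2 - 1/π, 1, 1/2, 2/3, 2, 2, by linarith, one_pos, by norm_num, by norm_num,
      two_pos, two_pos, ?_⟩
    intro ε hε hε1
    have hεπ : ε ≤ π := by linarith
    have hs1 : (1:ℝ) ≤ ε⁻¹ := by
      rw [show (1:ℝ) = 1⁻¹ by norm_num]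
      exact inv_anti₀ hε hε1
    rw [uSpike_int3 ε hε hεπ, uSpike_int2 ε hε hεπ, deriv_uSpike_sq_integral ε hε hε1]
    have hs2 : ε⁻¹ ≤ ε⁻¹ ^ 2 := by nlinarith
    have hmul : (1/π) * ε⁻¹ ≤ (1/π) * ε⁻¹ ^ 2 := by
      apply mul_le_mul_of_nonneg_left hs2 (by positivity)
    have hsq1 : (1:ℝ) ≤ ε⁻¹ ^ 2 := by nlinarith
    have hp2 : (9:ℝ) < π^2 := by nlinarith
    have hπ2inv : 1/(2*π^2) ≤ 1/18 := by
      rw [div_le_div_iff₀ (by nlinarith) (by norm_num)]; nlinarith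
    have h2πinv : (2*π)⁻¹ ≤ 1/6 := by
      rw [inv_le_iff_one_le_mul₀ (by positivity)]
      · nlinarith
    have h2πinvpos : (0:ℝ) < (2*π)⁻¹ := by positivity
    refine ⟨?_, ?_, ?_, ?_, le_refl _, le_refl _⟩
    · rw [show ε⁻¹ / π = (1/π) * ε⁻¹ from by ring]
      have hpos : (0:ℝ) < 1/(2*π^2) := by positivity
      nlinarith [hmul]
    · have : (0:ℝ) < ε⁻¹ / π := by positivity
      nlinarith
    · nlinarith
    · linarith
  · intro κ C hC h
    by_contra hκ
    push_neg at hκ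
    set a := (2 - κ)/2 with ha
    set b := (1 + κ)/2 with hb
    have hbpos : 0 < b := by rw [hb]; linarith
    set K := C * 2 ^ a * (2/3 : ℝ) ^ b with hK
    have hKpos : 0 < K := by
      apply mul_pos (mul_pos hC (Real.rpow_pos_of_pos two_pos a))
        (Real.rpow_pos_of_pos (by norm_num) b)
    set c₁ : ℝ := 1/2 - 1/π with hc₁
    have hc₁pos : 0 < c₁ := by rw [hc₁]; linarith
    set δ := κ - 3/2 with hδ
    have hδpos : 0 < δ := by rw [hδ]; linarith
    set M := K / c₁ with hM
    have hMpos : 0 < M := div_pos hKpos hc₁pos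
    have key : ∀ s : ℝ, 1 ≤ s → s ^ δ ≤ M := by
      intro s hs1
      have hs0 : (0:ℝ) < s := by linarith
      have hε : (0:ℝ) < s⁻¹ := by positivity
      have hε1 : s⁻¹ ≤ 1 := inv_le_one_of_one_le₀ hs1
      have hεπ : s⁻¹ ≤ π := by linarith
      have happ := h (uSpike s⁻¹) (uSpike_periodic s⁻¹) ⟨_, uSpike_lipschitz s⁻¹ hε⟩
        (uSpike_int1 s⁻¹ hε hεπ)
      rw [uSpike_int3 s⁻¹ hε hεπ, uSpike_int2 s⁻¹ hε hεπ,
        deriv_uSpike_sq_integral s⁻¹ hε hε1, inv_inv] at happ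
      -- lower bound on LHS
      have hsq : s ≤ s^2 := by nlinarith
      have hlhs : c₁ * s^2 ≤ 1/2 * s^2 - s/π + 1/(2*π^2) := by
        have hmul : (1/π) * s ≤ (1/π) * s^2 :=
          mul_le_mul_of_nonneg_left hsq (by positivity)
        have hpos : (0:ℝ) < 1/(2*π^2) := by positivity
        rw [hc₁, show s/π = (1/π) * s from by ring]
        nlinarith [hmul]
      have hlhs2 : c₁ * s^2 ≤ |1/2 * s^2 - s/π + 1/(2*π^2)| :=
        le_trans hlhs (le_abs_self _)
      -- upper bound on RHS
      have h2πinv : (2*π)⁻¹ ≤ 1/6 := by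
        rw [inv_le_iff_one_le_mul₀ (by positivity)]
        nlinarith
      have hI2nonneg : (0:ℝ) ≤ 2/3 * s - (2*π)⁻¹ := by nlinarith
      have hI2ub : 2/3 * s - (2*π)⁻¹ ≤ 2/3 * s := by
        have : (0:ℝ) < (2*π)⁻¹ := by positivity
        linarith
      have hrpow2 : (2/3 * s - (2*π)⁻¹) ^ b ≤ (2/3 * s) ^ b :=
        Real.rpow_le_rpow hI2nonneg hI2ub hbpos.le
      have hfactpos : (0:ℝ) ≤ C * (2 * s^3) ^ a :=
        mul_nonneg hC.le (Real.rpow_nonneg (by positivity) a)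
      have hstep : |1/2 * s^2 - s/π + 1/(2*π^2)| ≤ C * (2 * s^3) ^ a * (2/3 * s) ^ b :=
        le_trans happ (mul_le_mul_of_nonneg_left hrpow2 hfactpos)
      have e1 : (2 * s^3 : ℝ) ^ a = 2 ^ a * s ^ (3 * a) := by
        rw [Real.mul_rpow (by norm_num) (by positivity), ← Real.rpow_natCast s 3,
          ← Real.rpow_mul hs0.le]
        norm_num
      have e2 : (2/3 * s : ℝ) ^ b = (2/3 : ℝ) ^ b * s ^ b :=
        Real.mul_rpow (by norm_num) hs0.le
      have hfinal : (c₁ * s ^ δ) * s ^ (3*a + b) ≤ K * s ^ (3*a + b) := by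
        calc (c₁ * s ^ δ) * s ^ (3*a + b) = c₁ * (s ^ δ * s ^ (3*a + b)) := by ring
          _ = c₁ * s ^ (δ + (3*a + b)) := by rw [← Real.rpow_add hs0]
          _ = c₁ * s ^ (2:ℝ) := by
              rw [show δ + (3*a + b) = 2 from by rw [ha, hb, hδ]; ring]
          _ = c₁ * s ^ (2:ℕ) := by rw [← Real.rpow_natCast s 2]; norm_num
          _ ≤ C * (2 * s^3) ^ a * (2/3 * s) ^ b := le_trans hlhs2 hstep
          _ = K * (s ^ (3*a) * s ^ b) := by rw [e1, e2, hK]; ring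
          _ = K * s ^ (3*a + b) := by rw [← Real.rpow_add hs0]
      have hq0 : (0:ℝ) < s ^ (3*a + b) := Real.rpow_pos_of_pos hs0 _
      have hcs : c₁ * s ^ δ ≤ K := (mul_le_mul_iff_left₀ hq0).mp hfinal
      rw [hM, le_div_iff₀ hc₁pos]
      calc s ^ δ * c₁ = c₁ * s ^ δ := by ring
        _ ≤ K := hcs
    set s₀ := (M + 1) ^ δ⁻¹ with hs₀
    have hs₀1 : (1:ℝ) ≤ s₀ := by
      rw [hs₀]
      calc (1:ℝ) = 1 ^ δ⁻¹ := (Real.one_rpow _).symm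
        _ ≤ (M + 1) ^ δ⁻¹ :=
          Real.rpow_le_rpow (by norm_num) (by linarith) (by positivity)
    have hs₀δ : s₀ ^ δ = M + 1 := by
      rw [hs₀, ← Real.rpow_mul (by linarith : (0:ℝ) ≤ M + 1),
        inv_mul_cancel₀ hδpos.ne', Real.rpow_one]
    have := key s₀ hs₀1
    rw [hs₀δ] at this
    linarith
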